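/- If U ≤ G is regular, then for every preference profile p, the set S₁^U(p) = { q ∈ S_n : ψ q ρ = q for all (φ,ψ,ρ) ∈ Stab_U(p) } equals L(N) if Stab_U(p) ≤ S_h × {id} × {id}, and equals the left coset u·C_{S_n}(ρ₀) (for u with ψ* = uρ₀u⁻¹ as in the regularity condition) otherwise; in particular |S₁^U(p)| is n! in the first case and 2^{⌊n/2⌋}⌊n/2⌋! in the second. -/

import Mathlib

/-- A preference profile: each individual `i : Fin h` has a linear order on the `n`
alternatives, identified with the permutation of `Fin n` mapping ranks to alternatives. -/
abbrev Profile (h n : Nat) := Fin h → Equiv.Perm (Fin n)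

/-- The order-reversing permutation `ρ₀`. -/
def rho0 (n : Nat) : Equiv.Perm (Fin n) := Fin.revPerm

/-- The subgroup `Ω = {id, ρ₀}` of `S_n` (generated by `ρ₀`, which has order 2). -/
def Omega (n : Nat) : Subgroup (Equiv.Perm (Fin n)) := Subgroup.zpowers (rho0 n)

/-- `ρ₀` as an element of `Ω`. -/
def omegaRho0 (n : Nat) : Omega n := ⟨rho0 n, Subgroup.mem_zpowers _⟩

/-- The group `G = S_h × S_n × Ω`. -/
abbrev GG (h n : Nat) := Equiv.Perm (Fin h) × Equiv.Perm (Fin n) × (Omega n)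

/-- The action of `(φ, ψ, ρ) ∈ G` on a profile: `(p^{(φ,ψ,ρ)})_i = ψ p_{φ⁻¹(i)} ρ`. -/
def act {h n : Nat} (g : GG h n) (p : Profile h n) : Profile h n :=
  fun i => g.2.1 * p (g.1⁻¹ i) * (g.2.2 : Equiv.Perm (Fin n))

/-- A rule `F` is `U`-symmetric if `F(p^{(φ,ψ,ρ)}) = ψ F(p) ρ` for all `p` and `(φ,ψ,ρ) ∈ U`. -/
def USymm {h n : Nat} (U : Set (GG h n)) (F : Profile h n → Equiv.Perm (Fin n)) : Prop :=
  ∀ p : Profile h n, ∀ g ∈ U, F (act g p) = g.2.1 * F p * (g.2.2 : Equiv.Perm (Fin n))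

/-- `S₁^U(p) = { q : ψ q ρ = q for all (φ,ψ,ρ) in the stabilizer of p in U }`. -/
def S1set {h n : Nat} (U : Set (GG h n)) (p : Profile h n) : Set (Equiv.Perm (Fin n)) :=
  {q | ∀ g ∈ U, act g p = p → g.2.1 * q * (g.2.2 : Equiv.Perm (Fin n)) = q}

/-- Regularity of `U`: for every profile `p` there is `ψ*` conjugate to `ρ₀` with
`Stab_U(p) ⊆ (S_h × {id} × {id}) ∪ (S_h × {ψ*} × {ρ₀})`. -/
def Regular {h n : Nat} (U : Set (GG h n)) : Prop :=
  ∀ p : Profile h n, ∃ ψs : Equiv.Perm (Fin n), IsConj (rho0 n) ψs ∧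
    ∀ g ∈ U, act g p = p →
      (g.2.1 = 1 ∧ (g.2.2 : Equiv.Perm (Fin n)) = 1) ∨
      (g.2.1 = ψs ∧ (g.2.2 : Equiv.Perm (Fin n)) = rho0 n)

/-- Number of individuals strictly preferring `x` to `y` in profile `p`
(smaller rank = better, since permutations send ranks to alternatives). -/
def prefCount {h n : Nat} (p : Profile h n) (x y : Fin n) : Nat :=
  (Finset.univ.filter fun i => (p i)⁻¹ x < (p i)⁻¹ y).card

/-- `C_ν(p)`: linear orders consistent with the `ν`-majority principle applied to `p`. -/
def Cset {h n : Nat} (p : Profile h n) (ν : Nat) : Set (Equiv.Perm (Fin n)) :=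
  {q | ∀ x y : Fin n, ν ≤ prefCount p x y → q⁻¹ x < q⁻¹ y}

/-- `ν(p)`: the minimal majority threshold `ν ∈ ℕ ∩ (h/2, h]` with `C_ν(p) ≠ ∅`. -/
noncomputable def nuMin {h n : Nat} (p : Profile h n) : Nat :=
  sInf {ν : Nat | h < 2 * ν ∧ ν ≤ h ∧ (Cset p ν).Nonempty}

/-- minimal majority rule. -/
def MinMaj {h n : Nat} (F : Profile h n → Equiv.Perm (Fin n)) : Prop :=
  ∀ p : Profile h n, F p ∈ Cset p (nuMin p)

/-- `gcd(T(φ))`: the gcd of the lengths of the orbits (cycles) of `φ`. -/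
noncomputable def gcdOrbits {h : Nat} (phi : Equiv.Perm (Fin h)) : Nat :=
  Finset.univ.gcd fun i => Function.minimalPeriod (⇑phi) i

namespace Stmt8Aux
open Equiv

variable {n : ℕ}

lemma rho0_apply (i : Fin n) : rho0 n i = i.rev := rfl

lemma rho0_sq : rho0 n * rho0 n = 1 := by
  ext i
  simp [rho0, Fin.rev_rev]

def lo (j : Fin (n/2)) : Fin n := ⟨j.val, lt_of_lt_of_le j.isLt (Nat.div_le_self n 2)⟩

lemma lo_lt (j : Fin (n/2)) : (lo j : Fin n).val < n/2 := j.isLt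

lemma lo_inj : Function.Injective (lo (n := n)) := fun a b h =>
  Fin.ext (congrArg (Fin.val : Fin n → ℕ) h)

lemma lo_rev_not_lt (j : Fin (n/2)) : ¬ (lo j : Fin n).rev.val < n/2 := by
  have h1 := j.isLt
  have h2 := (lo j : Fin n).isLt
  simp only [Fin.val_rev, lo]
  omega

lemma not_both_lt {x : Fin n} (h : x.val < n/2) : ¬ x.rev.val < n/2 := by
  have := x.isLt
  simp only [Fin.val_rev]
  omega

lemma middle_eq {i : Fin n} (h1 : ¬ i.val < n/2) (h2 : ¬ i.rev.val < n/2) : i.rev = i := by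
  have := i.isLt
  apply Fin.ext
  simp only [Fin.val_rev] at *
  omega

def Ff (σ : Perm (Fin (n/2))) (ε : Fin (n/2) → Bool) (i : Fin n) : Fin n :=
  if h : i.val < n/2 then
    (if ε ⟨i.val, h⟩ then (lo (σ ⟨i.val, h⟩)).rev else lo (σ ⟨i.val, h⟩))
  else if h2 : i.rev.val < n/2 then
    (if ε ⟨i.rev.val, h2⟩ then lo (σ ⟨i.rev.val, h2⟩) else (lo (σ ⟨i.rev.val, h2⟩)).rev)
  else i

lemma Ff_lo (σ : Perm (Fin (n/2))) (ε : Fin (n/2) → Bool) (j : Fin (n/2)) :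
    Ff σ ε (lo j) = if ε j then (lo (σ j)).rev else lo (σ j) := by
  rw [Ff, dif_pos (lo_lt j)]
  rfl

lemma Ff_hi (σ : Perm (Fin (n/2))) (ε : Fin (n/2) → Bool) (j : Fin (n/2)) :
    Ff σ ε (lo j).rev = if ε j then lo (σ j) else (lo (σ j)).rev := by
  rw [Ff, dif_neg (not_both_lt (lo_lt j))]
  split
  case isTrue h2 =>
    have hjj : (⟨((lo j : Fin n).rev).rev.val, h2⟩ : Fin (n/2)) = j := by
      apply Fin.ext
      simp [Fin.rev_rev, lo]
    rw [hjj]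
  case isFalse h2 =>
    exact absurd (by rw [Fin.rev_rev]; exact lo_lt j) h2

lemma Ff_mid (σ : Perm (Fin (n/2))) (ε : Fin (n/2) → Bool) {i : Fin n}
    (h1 : ¬ i.val < n/2) (h2 : ¬ i.rev.val < n/2) : Ff σ ε i = i := by
  rw [Ff, dif_neg h1, dif_neg h2]

lemma Ff_comm (σ : Perm (Fin (n/2))) (ε : Fin (n/2) → Bool) (i : Fin n) :
    Ff σ ε i.rev = (Ff σ ε i).rev := by
  by_cases h : i.val < n/2
  · have hi : i = lo ⟨i.val, h⟩ := Fin.ext rfl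
    rw [hi, Ff_hi, Ff_lo]
    cases hε : ε ⟨i.val, h⟩ <;> simp [Fin.rev_rev]
  · by_cases h2 : i.rev.val < n/2
    · have hir : i.rev = lo ⟨i.rev.val, h2⟩ := Fin.ext rfl
      have hi : i = (lo ⟨i.rev.val, h2⟩ : Fin n).rev := by rw [← hir, Fin.rev_rev]
      rw [hir, Ff_lo]
      conv_rhs => rw [hi, Ff_hi]
      cases hε : ε ⟨i.rev.val, h2⟩ <;> simp [Fin.rev_rev]
    · rw [middle_eq h h2, Ff_mid σ ε h h2]
      exact (middle_eq h h2).symm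

lemma Ff_inv (σ : Perm (Fin (n/2))) (ε : Fin (n/2) → Bool) (i : Fin n) :
    Ff σ ε (Ff σ⁻¹ (fun j => ε (σ⁻¹ j)) i) = i := by
  by_cases h : i.val < n/2
  · have hi : i = lo ⟨i.val, h⟩ := Fin.ext rfl
    rw [hi]
    cases hε : ε (σ⁻¹ ⟨i.val, h⟩) <;>
      (simp only [Equiv.Perm.inv_def] at hε; simp [Ff_lo, Ff_hi, hε, Fin.rev_rev])
  · by_cases h2 : i.rev.val < n/2
    · have hir : i.rev = lo ⟨i.rev.val, h2⟩ := Fin.ext rfl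
      have hi : i = (lo ⟨i.rev.val, h2⟩ : Fin n).rev := by rw [← hir, Fin.rev_rev]
      rw [hi]
      cases hε : ε (σ⁻¹ ⟨i.rev.val, h2⟩) <;>
        simp only [Ff_lo, Ff_hi, hε, Bool.false_eq_true, if_false, if_true] <;>
        simp [Ff_lo, Ff_hi, Fin.rev_rev]
    · rw [Ff_mid _ _ h h2, Ff_mid _ _ h h2]


def Phi (σ : Perm (Fin (n/2))) (ε : Fin (n/2) → Bool) : Perm (Fin n) where
  toFun := Ff σ ε
  invFun := Ff σ⁻¹ (fun j => ε (σ⁻¹ j))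
  right_inv := Ff_inv σ ε
  left_inv := by
    intro i
    have h1 : (fun j => ε (σ⁻¹ (σ j))) = ε := by
      funext j
      simp
    have h2 := Ff_inv σ⁻¹ (fun j => ε (σ⁻¹ j)) i
    rw [inv_inv] at h2
    rwa [h1] at h2

lemma Phi_apply (σ : Perm (Fin (n/2))) (ε : Fin (n/2) → Bool) (i : Fin n) :
    Phi σ ε i = Ff σ ε i := rfl

lemma Phi_comm (σ : Perm (Fin (n/2))) (ε : Fin (n/2) → Bool) :
    Phi σ ε * rho0 n = rho0 n * Phi σ ε := by
  apply Equiv.ext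
  intro i
  show Ff σ ε ((rho0 n) i) = (rho0 n) (Ff σ ε i)
  rw [rho0_apply, rho0_apply, Ff_comm]

lemma Phi_inj : Function.Injective
    (fun se : Perm (Fin (n/2)) × (Fin (n/2) → Bool) => Phi (n := n) se.1 se.2) := by
  rintro ⟨σ, ε⟩ ⟨σ', ε'⟩ hp
  simp only at hp
  have happ : ∀ j : Fin (n/2), Ff σ ε (lo j) = Ff σ' ε' (lo j) := by
    intro j
    have := congrArg (fun π : Perm (Fin n) => π (lo j)) hp
    simpa [Phi_apply] using this
  have key : ∀ j, σ j = σ' j ∧ ε j = ε' j := by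
    intro j
    have hj := happ j
    rw [Ff_lo, Ff_lo] at hj
    cases hε : ε j <;> cases hε' : ε' j <;> rw [hε, hε'] at hj <;>
        simp only [if_true, if_false, Bool.false_eq_true] at hj
    · exact ⟨lo_inj hj, rfl⟩
    · have h1 := lo_lt (σ j)
      rw [hj] at h1
      exact absurd h1 (lo_rev_not_lt (σ' j))
    · have h1 := lo_rev_not_lt (σ j)
      rw [hj] at h1
      exact absurd (lo_lt (σ' j)) h1
    · exact ⟨lo_inj (Fin.rev_injective hj), rfl⟩
  refine Prod.ext (Equiv.ext fun j => (key j).1) (funext fun j => (key j).2)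

lemma Phi_surj {v : Perm (Fin n)} (hv : v * rho0 n = rho0 n * v) :
    ∃ σ ε, Phi σ ε = v := by
  have hrev : ∀ i : Fin n, v i.rev = (v i).rev := by
    intro i
    have := congrArg (fun π : Perm (Fin n) => π i) hv
    simpa [rho0_apply] using this
  have key : ∀ j : Fin (n/2), ¬ (v (lo j)).val < n/2 → (v (lo j)).rev.val < n/2 := by
    intro j hj
    by_contra h2
    have hmid : (v (lo j)).rev = v (lo j) := middle_eq hj h2
    rw [← hrev] at hmid
    have h3 := v.injective hmid
    have h4 := lo_lt j
    rw [← h3] at h4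
    exact lo_rev_not_lt j h4
  let σf : Fin (n/2) → Fin (n/2) := fun j =>
    if h : (v (lo j)).val < n/2 then ⟨(v (lo j)).val, h⟩
    else ⟨(v (lo j)).rev.val, key j h⟩
  have hσf : ∀ j : Fin (n/2),
      ((v (lo j)).val < n/2 ∧ v (lo j) = lo (σf j)) ∨
      (¬ (v (lo j)).val < n/2 ∧ v (lo j) = (lo (σf j)).rev) := by
    intro j
    by_cases h : (v (lo j)).val < n/2
    · left
      refine ⟨h, ?_⟩
      simp only [σf, dif_pos h]
      exact Fin.ext rfl
    · right
      refine ⟨h, ?_⟩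
      simp only [σf, dif_neg h]
      have : (lo (⟨(v (lo j)).rev.val, key j h⟩ : Fin (n/2)) : Fin n) = (v (lo j)).rev :=
        Fin.ext rfl
      rw [this, Fin.rev_rev]
  have hinj : Function.Injective σf := by
    intro a b hab
    rcases hσf a with ⟨ha, hva⟩ | ⟨ha, hva⟩ <;> rcases hσf b with ⟨hb, hvb⟩ | ⟨hb, hvb⟩
    · exact lo_inj (v.injective (hva.trans (hab ▸ hvb.symm)))
    · exfalso
      have h1 : v (lo a) = (v (lo b)).rev := by rw [hva, hvb, Fin.rev_rev, hab]
      rw [← hrev] at h1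
      have h2 := v.injective h1
      have h3 := lo_lt a
      rw [h2] at h3
      exact lo_rev_not_lt b h3
    · exfalso
      have h1 : v (lo b) = (v (lo a)).rev := by rw [hvb, hva, Fin.rev_rev, hab]
      rw [← hrev] at h1
      have h2 := v.injective h1
      have h3 := lo_lt b
      rw [h2] at h3
      exact lo_rev_not_lt a h3
    · exact lo_inj (v.injective (hva.trans (hab ▸ hvb.symm)))
  let σ : Perm (Fin (n/2)) := Equiv.ofBijective σf (Finite.injective_iff_bijective.mp hinj)
  have hσ : ∀ j, σ j = σf j := fun _ => rfl
  refine ⟨σ, fun j => !(decide ((v (lo j)).val < n/2)), ?_⟩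
  apply Equiv.ext
  intro i
  rw [Phi_apply]
  by_cases h : i.val < n/2
  · have hi : i = lo ⟨i.val, h⟩ := Fin.ext rfl
    rw [hi, Ff_lo]
    rcases hσf ⟨i.val, h⟩ with ⟨hb, hvb⟩ | ⟨hb, hvb⟩
    · have hc : (!(decide ((v (lo (⟨i.val, h⟩ : Fin (n/2)))).val < n/2))) = false := by
        simp only [Bool.not_eq_false', decide_eq_true_eq]
        exact hb
      rw [hc, if_neg (by simp)]
      rw [hvb, hσ]
    · have hc : (!(decide ((v (lo (⟨i.val, h⟩ : Fin (n/2)))).val < n/2))) = true := by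
        simp only [Bool.not_eq_true', decide_eq_false_iff_not]
        exact hb
      rw [hc, if_pos rfl]
      rw [hvb, hσ]
  · by_cases h2 : i.rev.val < n/2
    · have hir : i.rev = lo ⟨i.rev.val, h2⟩ := Fin.ext rfl
      have hi : i = (lo ⟨i.rev.val, h2⟩ : Fin n).rev := by rw [← hir, Fin.rev_rev]
      rw [hi, Ff_hi, hrev]
      rcases hσf ⟨i.rev.val, h2⟩ with ⟨hb, hvb⟩ | ⟨hb, hvb⟩
      · have hc : (!(decide ((v (lo (⟨i.rev.val, h2⟩ : Fin (n/2)))).val < n/2))) = false := by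
          simp only [Bool.not_eq_false', decide_eq_true_eq]
          exact hb
        rw [hc, if_neg (by simp)]
        rw [hvb, hσ]
      · have hc : (!(decide ((v (lo (⟨i.rev.val, h2⟩ : Fin (n/2)))).val < n/2))) = true := by
          simp only [Bool.not_eq_true', decide_eq_false_iff_not]
          exact hb
        rw [hc, if_pos rfl]
        rw [hvb, Fin.rev_rev, hσ]
    · rw [Ff_mid _ _ h h2]
      have hm : i.rev = i := middle_eq h h2
      have hvfix : (v i).rev = v i := by rw [← hrev, hm]
      have e1 : n - (i.val + 1) = i.val := by
        rw [← Fin.val_rev]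
        exact congrArg Fin.val hm
      have e2 : n - ((v i).val + 1) = (v i).val := by
        rw [← Fin.val_rev]
        exact congrArg Fin.val hvfix
      have hlt1 := i.isLt
      have hlt2 := (v i).isLt
      exact Fin.ext (by omega : i.val = (v i).val)

noncomputable def centEquiv :
    (Perm (Fin (n/2)) × (Fin (n/2) → Bool)) ≃ {v : Perm (Fin n) // v * rho0 n = rho0 n * v} :=
  Equiv.ofBijective (fun se => ⟨Phi se.1 se.2, Phi_comm se.1 se.2⟩)
    ⟨fun a b hab => Phi_inj (Subtype.ext_iff.mp hab),
     fun w => by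
      obtain ⟨σ, ε, hσε⟩ := Phi_surj w.2
      exact ⟨(σ, ε), Subtype.ext hσε⟩⟩

lemma card_cent :
    Nat.card {v : Perm (Fin n) // v * rho0 n = rho0 n * v}
      = 2^(n/2) * (n/2).factorial := by
  rw [← Nat.card_congr (centEquiv (n := n)), Nat.card_eq_fintype_card, Fintype.card_prod,
    Fintype.card_perm, Fintype.card_fin, Fintype.card_fun, Fintype.card_bool, Fintype.card_fin,
    Nat.mul_comm]

end Stmt8Aux

open Stmt8Aux in
theorem stmt8 {h n : Nat} (hh : 2 ≤ h) (hn : 2 ≤ n) (U : Subgroup (GG h n))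
    (hreg : Regular (U : Set (GG h n))) (p : Profile h n) :
    ((∀ g ∈ U, act g p = p → g.2.1 = 1 ∧ (g.2.2 : Equiv.Perm (Fin n)) = 1) →
      S1set (U : Set (GG h n)) p = Set.univ ∧
      (S1set (U : Set (GG h n)) p).ncard = n.factorial) ∧
    (∀ u : Equiv.Perm (Fin n), ∀ g ∈ U, act g p = p →
      (g.2.2 : Equiv.Perm (Fin n)) = rho0 n → g.2.1 = u * rho0 n * u⁻¹ →
      S1set (U : Set (GG h n)) p
          = (fun v => u * v) '' {v : Equiv.Perm (Fin n) | v * rho0 n = rho0 n * v} ∧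
      (S1set (U : Set (GG h n)) p).ncard = 2 ^ (n / 2) * (n / 2).factorial) := by
  constructor
  · intro htriv
    have hset : S1set (U : Set (GG h n)) p = Set.univ := by
      ext q
      simp only [Set.mem_univ, iff_true, S1set, Set.mem_setOf_eq]
      intro g hg hgp
      obtain ⟨h1, h2⟩ := htriv g hg hgp
      rw [h1, h2, one_mul, mul_one]
    refine ⟨hset, ?_⟩
    rw [hset, Set.ncard_univ, Nat.card_eq_fintype_card, Fintype.card_perm, Fintype.card_fin]
  · intro u g hg hgp hρ hψ
    obtain ⟨ψs, _, hdich⟩ := hreg p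
    have hρ0ne : rho0 n ≠ 1 := by
      intro hone
      have h0 : rho0 n ⟨0, by omega⟩ = ⟨0, by omega⟩ := by rw [hone]; rfl
      have h1 := congrArg Fin.val h0
      rw [rho0_apply, Fin.val_rev] at h1
      simp only [Fin.val_mk] at h1
      omega
    have hψs : ψs = u * rho0 n * u⁻¹ := by
      rcases hdich g hg hgp with ⟨_, h2⟩ | ⟨h1, _⟩
      · rw [hρ] at h2
        exact absurd h2 hρ0ne
      · rw [← h1, hψ]
    have hset : S1set (U : Set (GG h n)) p
        = (fun v => u * v) '' {v : Equiv.Perm (Fin n) | v * rho0 n = rho0 n * v} := by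
      ext q
      constructor
      · intro hq
        have hkey := hq g hg hgp
        rw [hψ, hρ] at hkey
        refine ⟨u⁻¹ * q, ?_, by simp [mul_assoc]⟩
        have key : rho0 n * (u⁻¹ * q) * rho0 n = u⁻¹ * q := by
          have h2 := congrArg (fun x => u⁻¹ * x) hkey
          simpa [mul_assoc] using h2
        show (u⁻¹ * q) * rho0 n = rho0 n * (u⁻¹ * q)
        have h3 := congrArg (fun x => rho0 n * x) key
        simp only [← mul_assoc, rho0_sq, one_mul] at h3
        rw [h3, mul_assoc]
      · rintro ⟨v, hv, rfl⟩
        intro g' hg' hg'p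
        rcases hdich g' hg' hg'p with ⟨h1, h2⟩ | ⟨h1, h2⟩
        · rw [h1, h2, one_mul, mul_one]
        · rw [h1, h2, hψs]
          have hv' : v * rho0 n = rho0 n * v := hv
          have expand : u * rho0 n * u⁻¹ * (u * v) * rho0 n = u * (rho0 n * v * rho0 n) := by
            group
          rw [expand, ← hv', mul_assoc v, rho0_sq, mul_one]
    refine ⟨hset, ?_⟩
    rw [hset, Set.ncard_image_of_injective _ (mul_right_injective u),
      ← Nat.card_coe_set_eq]
    exact card_cent
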